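/- Let M = C^{d×d} with delta-form δ(x) = d·tr(xσ) for σ positive invertible with tr(σ^{-1}) = d. Let L²(M) be M with inner product ⟨x,y⟩ = δ(y*x) and L²(M⊗M) = M⊗M with the tensor inner product. Then the multiplication map m: L²(M⊗M) → L²(M), m(x⊗y) = xy, satisfies m ∘ m* = id. -/

import Mathlib

open scoped ComplexOrder TensorProduct
open Matrix

open Matrix in
private lemma trace_mul_stdBasisMatrix {d : ℕ} (B : Matrix (Fin d) (Fin d) ℂ) (i j : Fin d) :
    (B * single i j 1).trace = B j i := by
  rw [Matrix.trace, Finset.sum_eq_single j]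
  · simp [Matrix.diag]
  · intro b _ hb
    simpa [Matrix.diag] using Matrix.mul_single_apply_of_ne (c := (1:ℂ)) i j b b hb B
  · simp

open Matrix in
private lemma stdBasis_sandwich {d : ℕ} (A : Matrix (Fin d) (Fin d) ℂ) (k l : Fin d) :
    single l k (1:ℂ) * A * single k l 1 = A k k • single l l 1 := by
  ext i j
  simp [Matrix.mul_apply, Matrix.single, Finset.sum_ite_eq, ite_and, Finset.sum_ite_eq',
    Matrix.smul_apply, smul_eq_mul]
  by_cases hi : i = l <;> by_cases hj : l = j <;> simp [hi, hj, mul_comm]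

open Matrix in
private lemma sum_stdBasis_diag_eq_one {d : ℕ} : ∑ l : Fin d, single l l (1:ℂ) = 1 := by
  ext i j
  simp [Matrix.sum_apply, Matrix.single, Matrix.one_apply, ite_and]

/-- For `M = ℂ^{d×d}` with delta-form `δ(x) = d·tr(xσ)` (with `σ` positive
invertible and `tr(σ⁻¹) = d`), the multiplication map `m : L²(M⊗M) → L²(M)` satisfies
`m ∘ m* = id`, where `m*` is the adjoint for the GNS inner products. -/
theorem stmt1 (d : ℕ) (hd : 0 < d)
    (σ : Matrix (Fin d) (Fin d) ℂ) (hσ : σ.PosDef)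
    (htr : (σ⁻¹).trace = (d : ℂ))
    -- the GNS inner product on L²(M), ⟨x,y⟩ = δ(y*x), linear in the first variable
    (ip : Matrix (Fin d) (Fin d) ℂ → Matrix (Fin d) (Fin d) ℂ → ℂ)
    (hip : ∀ x y, ip x y = (d : ℂ) * ((star y) * x * σ).trace)
    -- the tensor product inner product on L²(M ⊗ M)
    (ip2 : (Matrix (Fin d) (Fin d) ℂ ⊗[ℂ] Matrix (Fin d) (Fin d) ℂ) →
      (Matrix (Fin d) (Fin d) ℂ ⊗[ℂ] Matrix (Fin d) (Fin d) ℂ) → ℂ)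
    (hip2₁ : ∀ u v w, ip2 (u + v) w = ip2 u w + ip2 v w)
    (hip2₂ : ∀ u v w, ip2 u (v + w) = ip2 u v + ip2 u w)
    (hip2t : ∀ x y z t, ip2 (x ⊗ₜ[ℂ] y) (z ⊗ₜ[ℂ] t) = ip x z * ip y t)
    -- `m*`, the adjoint of the multiplication map `m = LinearMap.mul'`
    (mstar : Matrix (Fin d) (Fin d) ℂ →ₗ[ℂ]
      Matrix (Fin d) (Fin d) ℂ ⊗[ℂ] Matrix (Fin d) (Fin d) ℂ)
    (hadj : ∀ x ξ, ip2 (mstar x) ξ =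
      ip x (LinearMap.mul' ℂ (Matrix (Fin d) (Fin d) ℂ) ξ)) :
    ∀ x, LinearMap.mul' ℂ (Matrix (Fin d) (Fin d) ℂ) (mstar x) = x := by
  classical
  have hdet : IsUnit σ.det := hσ.det_pos.ne'.isUnit
  have hσσ : σ * σ⁻¹ = 1 := Matrix.mul_nonsing_inv σ hdet
  have hσσ' : σ⁻¹ * σ = 1 := Matrix.nonsing_inv_mul σ hdet
  have hdne : (d : ℂ) ≠ 0 := Nat.cast_ne_zero.mpr hd.ne'
  -- basic properties of ip
  have hipadd₂ : ∀ a b c : Matrix (Fin d) (Fin d) ℂ, ip a (b + c) = ip a b + ip a c := by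
    intro a b c
    simp [hip, star_add, Matrix.add_mul, Matrix.trace_add, mul_add]
  have hipsym : ∀ a b : Matrix (Fin d) (Fin d) ℂ, star (ip a b) = ip b a := by
    intro a b
    rw [hip, hip, star_mul', star_natCast]
    congr 1
    rw [← Matrix.trace_conjTranspose]
    have h : (star b * a * σ)ᴴ = σ * (star a * b) := by
      simp only [Matrix.star_eq_conjTranspose, Matrix.conjTranspose_mul,
        Matrix.conjTranspose_conjTranspose, hσ.isHermitian.eq, Matrix.mul_assoc]
    rw [h, Matrix.trace_mul_comm, Matrix.mul_assoc]
  -- ip2 vanishes at 0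
  have h0₁ : ∀ w, ip2 0 w = 0 := by
    intro w
    have h := hip2₁ 0 0 w
    rw [add_zero] at h
    exact add_eq_left.mp h.symm
  have h0₂ : ∀ w, ip2 w 0 = 0 := by
    intro w
    have h := hip2₂ w 0 0
    rw [add_zero] at h
    exact add_eq_left.mp h.symm
  -- additivity over finite sums in the first slot
  have hsum₁ : ∀ (f : Fin d × Fin d →
        Matrix (Fin d) (Fin d) ℂ ⊗[ℂ] Matrix (Fin d) (Fin d) ℂ)
      (w : Matrix (Fin d) (Fin d) ℂ ⊗[ℂ] Matrix (Fin d) (Fin d) ℂ),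
      ip2 (∑ p : Fin d × Fin d, f p) w = ∑ p : Fin d × Fin d, ip2 (f p) w := by
    intro f w
    induction (Finset.univ : Finset (Fin d × Fin d)) using Finset.induction with
    | empty => simpa using h0₁ w
    | insert _ _ hns ih => rw [Finset.sum_insert hns, Finset.sum_insert hns, hip2₁, ih]
  -- conjugate symmetry of ip2
  have hsym2 : ∀ u v : Matrix (Fin d) (Fin d) ℂ ⊗[ℂ] Matrix (Fin d) (Fin d) ℂ,
      star (ip2 u v) = ip2 v u := by
    intro u
    induction u using TensorProduct.induction_on with
    | zero => intro v; simp [h0₁, h0₂]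
    | tmul a b =>
      intro v
      induction v using TensorProduct.induction_on with
      | zero => simp [h0₁, h0₂]
      | tmul c e => rw [hip2t, hip2t, star_mul', hipsym, hipsym]
      | add v w ihv ihw => rw [hip2₂, hip2₁, star_add, ihv, ihw]
    | add u w ihu ihw =>
      intro v
      rw [hip2₁, hip2₂, star_add, ihu v, ihw v]
  -- the explicit candidate for m*
  set η : Matrix (Fin d) (Fin d) ℂ →
      Matrix (Fin d) (Fin d) ℂ ⊗[ℂ] Matrix (Fin d) (Fin d) ℂ := fun x =>
    ∑ p : Fin d × Fin d,
      ((d : ℂ)⁻¹ • (x * σ * single p.2 p.1 1 * σ⁻¹)) ⊗ₜ[ℂ]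
        (single p.1 p.2 1 * σ⁻¹) with hη
  -- key computation : ip2 (η x) (z ⊗ t) = ip x (z * t)
  have hkey : ∀ (x z t : Matrix (Fin d) (Fin d) ℂ),
      ip2 (η x) (z ⊗ₜ[ℂ] t) = ip x (z * t) := by
    intro x z t
    rw [hη]
    simp only
    rw [hsum₁]
    have h1 : ∀ p : Fin d × Fin d,
        ip ((d : ℂ)⁻¹ • (x * σ * single p.2 p.1 1 * σ⁻¹)) z
          = (star z * x * σ) p.1 p.2 := by
      intro p
      rw [hip, Matrix.mul_smul, Matrix.smul_mul, Matrix.trace_smul, smul_eq_mul,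
        ← mul_assoc, mul_inv_cancel₀ hdne, one_mul]
      have h : star z * (x * σ * single p.2 p.1 1 * σ⁻¹) * σ
          = star z * x * σ * single p.2 p.1 1 := by
        calc star z * (x * σ * single p.2 p.1 1 * σ⁻¹) * σ
            = star z * x * σ * single p.2 p.1 1 * (σ⁻¹ * σ) := by
              simp only [Matrix.mul_assoc]
          _ = star z * x * σ * single p.2 p.1 1 := by rw [hσσ', Matrix.mul_one]
      rw [h, trace_mul_stdBasisMatrix]
    have h2 : ∀ p : Fin d × Fin d,
        ip (single p.1 p.2 1 * σ⁻¹) t = (d : ℂ) * (star t) p.2 p.1 := by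
      intro p
      rw [hip, Matrix.mul_assoc (star t), Matrix.mul_assoc, hσσ', Matrix.mul_one,
        trace_mul_stdBasisMatrix]
    calc ∑ p : Fin d × Fin d,
          ip2 (((d : ℂ)⁻¹ • (x * σ * single p.2 p.1 1 * σ⁻¹)) ⊗ₜ[ℂ]
            (single p.1 p.2 1 * σ⁻¹)) (z ⊗ₜ[ℂ] t)
        = ∑ p : Fin d × Fin d, (star z * x * σ) p.1 p.2 * ((d : ℂ) * (star t) p.2 p.1) := by
          refine Finset.sum_congr rfl fun p _ => ?_
          rw [hip2t, h1, h2]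
      _ = (d : ℂ) * ∑ p : Fin d × Fin d, (star z * x * σ) p.1 p.2 * (star t) p.2 p.1 := by
          rw [Finset.mul_sum]
          exact Finset.sum_congr rfl fun p _ => by ring
      _ = (d : ℂ) * ((star z * x * σ) * star t).trace := by
          congr 1
          rw [Matrix.trace, Fintype.sum_prod_type]
          simp only [Matrix.diag_apply, Matrix.mul_apply]
      _ = ip x (z * t) := by
          rw [hip, Matrix.star_mul, Matrix.trace_mul_comm]
          congr 1
          simp only [Matrix.mul_assoc]
  have hηadj : ∀ (x : Matrix (Fin d) (Fin d) ℂ)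
      (ξ : Matrix (Fin d) (Fin d) ℂ ⊗[ℂ] Matrix (Fin d) (Fin d) ℂ),
      ip2 (η x) ξ = ip x (LinearMap.mul' ℂ (Matrix (Fin d) (Fin d) ℂ) ξ) := by
    intro x ξ
    induction ξ using TensorProduct.induction_on with
    | zero => simp [h0₂, hip]
    | tmul z t => rw [hkey]; rw [LinearMap.mul'_apply]
    | add u v ihu ihv => rw [hip2₂, map_add, hipadd₂, ihu, ihv]
  -- m (η x) = x
  have hmη : ∀ x : Matrix (Fin d) (Fin d) ℂ,
      LinearMap.mul' ℂ (Matrix (Fin d) (Fin d) ℂ) (η x) = x := by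
    intro x
    rw [hη]
    simp only [map_sum]
    have hterm : ∀ p : Fin d × Fin d,
        LinearMap.mul' ℂ (Matrix (Fin d) (Fin d) ℂ)
            (((d : ℂ)⁻¹ • (x * σ * single p.2 p.1 1 * σ⁻¹)) ⊗ₜ[ℂ]
              (single p.1 p.2 1 * σ⁻¹))
          = ((d : ℂ)⁻¹ * σ⁻¹ p.1 p.1) • (x * σ * single p.2 p.2 1 * σ⁻¹) := by
      intro p
      rw [LinearMap.mul'_apply, Matrix.smul_mul]
      have hmid : x * σ * single p.2 p.1 1 * σ⁻¹ * (single p.1 p.2 1 * σ⁻¹)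
          = σ⁻¹ p.1 p.1 • (x * σ * single p.2 p.2 1 * σ⁻¹) := by
        have hs : single p.2 p.1 1 * σ⁻¹ * single p.1 p.2 1
            = σ⁻¹ p.1 p.1 • single p.2 p.2 1 :=
          stdBasis_sandwich σ⁻¹ p.1 p.2
        calc x * σ * single p.2 p.1 1 * σ⁻¹ * (single p.1 p.2 1 * σ⁻¹)
            = x * σ * (single p.2 p.1 1 * σ⁻¹ * single p.1 p.2 1) * σ⁻¹ := by
              simp only [Matrix.mul_assoc]
          _ = σ⁻¹ p.1 p.1 • (x * σ * single p.2 p.2 1 * σ⁻¹) := by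
              rw [hs]
              simp only [Matrix.mul_smul, Matrix.smul_mul]
      rw [hmid, smul_smul]
    have hinner : ∀ k : Fin d,
        ∑ l : Fin d, ((d : ℂ)⁻¹ * σ⁻¹ k k) • (x * σ * single l l 1 * σ⁻¹)
          = ((d : ℂ)⁻¹ * σ⁻¹ k k) • x := by
      intro k
      rw [← Finset.smul_sum, ← Matrix.sum_mul, ← Matrix.mul_sum,
        sum_stdBasis_diag_eq_one, Matrix.mul_one, Matrix.mul_assoc, hσσ, Matrix.mul_one]
    calc ∑ p : Fin d × Fin d,
          LinearMap.mul' ℂ (Matrix (Fin d) (Fin d) ℂ)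
            (((d : ℂ)⁻¹ • (x * σ * single p.2 p.1 1 * σ⁻¹)) ⊗ₜ[ℂ]
              (single p.1 p.2 1 * σ⁻¹))
        = ∑ p : Fin d × Fin d,
            ((d : ℂ)⁻¹ * σ⁻¹ p.1 p.1) • (x * σ * single p.2 p.2 1 * σ⁻¹) :=
          Finset.sum_congr rfl fun p _ => hterm p
      _ = ∑ k : Fin d, ((d : ℂ)⁻¹ * σ⁻¹ k k) • x := by
          rw [Fintype.sum_prod_type]
          exact Finset.sum_congr rfl fun k _ => hinner k
      _ = x := by
          rw [← Finset.sum_smul, ← Finset.mul_sum]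
          have htr' : ∑ k : Fin d, σ⁻¹ k k = (σ⁻¹).trace := rfl
          rw [htr', htr, inv_mul_cancel₀ hdne, one_smul]
  -- nondegeneracy of ip
  have hnd : ∀ a b : Matrix (Fin d) (Fin d) ℂ, (∀ y, ip y a = ip y b) → a = b := by
    intro a b h
    have hD : ∀ y : Matrix (Fin d) (Fin d) ℂ,
        ((star a - star b) * y * σ).trace = 0 := by
      intro y
      have h1 := h y
      rw [hip, hip] at h1
      have h2 := mul_left_cancel₀ hdne h1
      rw [Matrix.sub_mul, Matrix.sub_mul, Matrix.trace_sub, h2, sub_self]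
    have hz : σ * (star a - star b) = 0 := by
      ext i j
      have h3 := hD (single j i 1)
      rw [Matrix.trace_mul_comm, ← Matrix.mul_assoc, trace_mul_stdBasisMatrix] at h3
      simpa using h3
    have h4 : star a - star b = 0 := by
      have h5 := congrArg (fun X => σ⁻¹ * X) hz
      simpa [← Matrix.mul_assoc, hσσ'] using h5
    have h6 : star a = star b := by rwa [sub_eq_zero] at h4
    exact star_injective h6
  -- conclusion
  intro x
  refine hnd _ _ fun y => ?_
  calc ip y (LinearMap.mul' ℂ (Matrix (Fin d) (Fin d) ℂ) (mstar x))
      = ip2 (mstar y) (mstar x) := (hadj y (mstar x)).symm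
    _ = star (ip2 (mstar x) (mstar y)) := (hsym2 _ _).symm
    _ = star (ip2 (η x) (mstar y)) := by rw [hadj, ← hηadj]
    _ = ip2 (mstar y) (η x) := hsym2 _ _
    _ = ip y (LinearMap.mul' ℂ (Matrix (Fin d) (Fin d) ℂ) (η x)) := hadj y (η x)
    _ = ip y x := by rw [hmη]
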